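/- arXiv:1205.2188 — 3 statements merged into one kernel-verified Lean document; each statement's English description precedes it below -/
import Mathlib

section
/- Let ψ, φ₁, φ₂ be Orlicz functions with φ₂* the complementary function of φ₂, ψ* the complementary function of ψ, and suppose φ₂ ∘ ψ = φ₁ (as finite-valued functions). Set ζ = φ₂ ∘ ψ*. Then for all u, v, w ≥ 0: uvw ≤ φ₂*(u) + (1/2)·[φ₁(2v) + ζ(2w)]. -/
open Filter

/-- The complementary (Young conjugate) function, with values in EReal. -/
noncomputable def orliczConjE (φ : ℝ → ℝ) (u : ℝ) : EReal :=
  ⨆ v ∈ Set.Ioi (0 : ℝ), ((u * v - φ v : ℝ) : EReal)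

lemma orlicz_small (φ : ℝ → ℝ) (hconv : ConvexOn ℝ (Set.Ici 0) φ) (h0 : φ 0 = 0)
    {v : ℝ} (hv0 : 0 ≤ v) (hv1 : v ≤ 1) : φ v ≤ v * φ 1 := by
  have := hconv.2 (Set.mem_Ici.2 (le_refl (0:ℝ))) (Set.mem_Ici.2 (zero_le_one))
    (show (0:ℝ) ≤ 1 - v by linarith) hv0 (show (1 - v) + v = 1 by ring)
  simpa [h0, smul_eq_mul] using this

lemma orliczConjE_nonneg (φ : ℝ → ℝ) (hconv : ConvexOn ℝ (Set.Ici 0) φ) (h0 : φ 0 = 0)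
    {u : ℝ} (hu : 0 ≤ u) : 0 ≤ orliczConjE φ u := by
  have key : ∀ ε : ℝ, 0 < ε → ((-ε : ℝ) : EReal) ≤ orliczConjE φ u := by
    intro ε hε
    set v : ℝ := min 1 (ε / (1 + |φ 1|)) with hvdef
    have hd : (0:ℝ) < 1 + |φ 1| := by positivity
    have hvpos : 0 < v := lt_min one_pos (div_pos hε hd)
    have hv1 : v ≤ 1 := min_le_left _ _
    have hφv : φ v ≤ v * φ 1 := orlicz_small φ hconv h0 hvpos.le hv1
    have hsmall : v * φ 1 ≤ ε := by
      have hv2 : v ≤ ε / (1 + |φ 1|) := min_le_right _ _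
      have h1 : v * φ 1 ≤ v * |φ 1| := by
        have := le_abs_self (φ 1); nlinarith
      have h2 : v * |φ 1| ≤ (ε / (1 + |φ 1|)) * |φ 1| := by
        apply mul_le_mul_of_nonneg_right hv2 (abs_nonneg _)
      have h3 : (ε / (1 + |φ 1|)) * |φ 1| ≤ ε := by
        rw [div_mul_eq_mul_div, div_le_iff₀ hd]
        nlinarith [abs_nonneg (φ 1)]
      linarith
    have hterm : (-ε : ℝ) ≤ u * v - φ v := by nlinarith
    calc ((-ε : ℝ) : EReal) ≤ ((u * v - φ v : ℝ) : EReal) := by exact_mod_cast hterm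
      _ ≤ orliczConjE φ u := le_iSup₂ (f := fun x (_ : x ∈ Set.Ioi (0:ℝ)) =>
          ((u * x - φ x : ℝ) : EReal)) v (Set.mem_Ioi.2 hvpos)
  by_contra h'
  push_neg at h'
  obtain ⟨x, hx1, hx2⟩ := exists_between h'
  -- x is an EReal strictly between orliczConjE φ u and 0
  obtain ⟨y, hy1, hy2⟩ := EReal.exists_between_coe_real hx2
  have hylt : orliczConjE φ u < (y : EReal) := lt_trans hx1 hy1
  have hy0 : (y : ℝ) < 0 := by exact_mod_cast hy2
  have := key (-y) (by linarith)
  rw [neg_neg] at this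
  exact absurd this (not_le.2 hylt)

lemma orlicz_mono (φ : ℝ → ℝ) (hconv : ConvexOn ℝ (Set.Ici 0) φ) (h0 : φ 0 = 0)
    (hnn : ∀ x, 0 ≤ x → 0 ≤ φ x) {x y : ℝ} (hx : 0 ≤ x) (hxy : x ≤ y) : φ x ≤ φ y := by
  rcases eq_or_lt_of_le hxy with h | h
  · rw [h]
  · have hy : 0 < y := lt_of_le_of_lt hx h
    have := hconv.2 (Set.mem_Ici.2 (le_refl (0:ℝ))) (Set.mem_Ici.2 hy.le)
      (show (0:ℝ) ≤ 1 - x / y by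
        have : x / y ≤ 1 := (div_le_one hy).2 hxy
        linarith)
      (div_nonneg hx hy.le) (show (1 - x / y) + x / y = 1 by ring)
    have hxyv : (1 - x / y) • (0:ℝ) + (x / y) • y = x := by
      field_simp
      rw [smul_zero, zero_add, smul_eq_mul, div_mul_cancel₀ x hy.ne']
    rw [hxyv] at this
    have hφy : 0 ≤ φ y := hnn y hy.le
    have hq : x / y ≤ 1 := (div_le_one hy).2 hxy
    calc φ x ≤ (1 - x / y) * φ 0 + (x / y) * φ y := by simpa [smul_eq_mul] using this
      _ = (x / y) * φ y := by rw [h0]; ring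
      _ ≤ 1 * φ y := mul_le_mul_of_nonneg_right hq hφy
      _ = φ y := one_mul _

/-- Let ψ, φ₁, φ₂ be Orlicz functions, ψ* the (finite-valued) complementary
function of ψ, and suppose φ₂ ∘ ψ = φ₁. With ζ = φ₂ ∘ ψ*, for all u, v, w ≥ 0:
uvw ≤ φ₂*(u) + (1/2)·[φ₁(2v) + ζ(2w)]. -/
theorem orlicz_mult_ineq_a (ψ φ₁ φ₂ ψstar : ℝ → ℝ)
    (hψconv : ConvexOn ℝ (Set.Ici 0) ψ) (hψ0 : ψ 0 = 0)
    (hψnn : ∀ x, 0 ≤ x → 0 ≤ ψ x) (hψtop : Tendsto ψ atTop atTop)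
    (hφ₁conv : ConvexOn ℝ (Set.Ici 0) φ₁) (hφ₁0 : φ₁ 0 = 0)
    (hφ₁nn : ∀ x, 0 ≤ x → 0 ≤ φ₁ x) (hφ₁top : Tendsto φ₁ atTop atTop)
    (hφ₂conv : ConvexOn ℝ (Set.Ici 0) φ₂) (hφ₂0 : φ₂ 0 = 0)
    (hφ₂nn : ∀ x, 0 ≤ x → 0 ≤ φ₂ x) (hφ₂top : Tendsto φ₂ atTop atTop)
    (hψstar : ∀ u : ℝ, 0 ≤ u → ((ψstar u : ℝ) : EReal) = orliczConjE ψ u)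
    (hcomp : ∀ u : ℝ, 0 ≤ u → φ₂ (ψ u) = φ₁ u) :
    ∀ u v w : ℝ, 0 ≤ u → 0 ≤ v → 0 ≤ w →
      ((u * v * w : ℝ) : EReal) ≤
        orliczConjE φ₂ u +
          (((1 / 2) * (φ₁ (2 * v) + φ₂ (ψstar (2 * w))) : ℝ) : EReal) := by
  intro u v w hu hv hw
  -- ψstar (2w) ≥ 0
  have htE : (0 : EReal) ≤ ((ψstar (2 * w) : ℝ) : EReal) := by
    rw [hψstar (2 * w) (by linarith)]
    exact orliczConjE_nonneg ψ hψconv hψ0 (by linarith)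
  have ht0 : 0 ≤ ψstar (2 * w) := by exact_mod_cast htE
  set t := ψstar (2 * w) with htdef
  set s := ψ (2 * v) with hsdef
  have hs0 : 0 ≤ s := hψnn _ (by linarith)
  have hS0 : (0 : EReal) ≤ orliczConjE φ₂ u := orliczConjE_nonneg φ₂ hφ₂conv hφ₂0 hu
  have hrhs0 : (0:ℝ) ≤ (1 / 2) * (φ₁ (2 * v) + φ₂ t) := by
    have h1 : 0 ≤ φ₁ (2 * v) := hφ₁nn _ (by linarith)
    have h2 : 0 ≤ φ₂ t := hφ₂nn _ ht0
    linarith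
  by_cases hvw0 : v * w = 0
  · have hL : ((u * v * w : ℝ) : EReal) = 0 := by
      rw [show u * v * w = 0 by rw [mul_assoc, hvw0, mul_zero]]
      exact EReal.coe_zero
    rw [hL]
    calc (0:EReal) = 0 + 0 := by simp
      _ ≤ orliczConjE φ₂ u + (((1 / 2) * (φ₁ (2 * v) + φ₂ t) : ℝ) : EReal) := by
        apply add_le_add hS0
        exact_mod_cast hrhs0
  have hvw : 0 < v * w := lt_of_le_of_ne (mul_nonneg hv hw) (Ne.symm hvw0)
  have hvpos : 0 < v := lt_of_le_of_ne hv (by rintro rfl; simp at hvw0)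
  have hwpos : 0 < w := lt_of_le_of_ne hw (by rintro rfl; simp at hvw0)
  -- main case: v > 0, w > 0
  -- Young for ψ: (2w)(2v) ≤ t + s
  have hyoung : (2 * w) * (2 * v) - s ≤ t := by
    have hle : (((2 * w) * (2 * v) - ψ (2 * v) : ℝ) : EReal) ≤ orliczConjE ψ (2 * w) :=
      le_iSup₂ (f := fun x (_ : x ∈ Set.Ioi (0:ℝ)) =>
        (((2 * w) * x - ψ x : ℝ) : EReal)) (2 * v) (Set.mem_Ioi.2 (by linarith))
    rw [← hψstar (2 * w) (by linarith)] at hle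
    exact_mod_cast hle
  -- v*w ≤ (s+t)/2
  have h1 : v * w ≤ (s + t) / 2 := by nlinarith
  -- φ₂ (v*w) ≤ (1/2)(φ₁(2v) + φ₂ t)
  have hkey : φ₂ (v * w) ≤ (1 / 2) * (φ₁ (2 * v) + φ₂ t) := by
    have hmono : φ₂ (v * w) ≤ φ₂ ((s + t) / 2) :=
      orlicz_mono φ₂ hφ₂conv hφ₂0 hφ₂nn hvw.le h1
    have hmid : φ₂ ((s + t) / 2) ≤ (1/2) * φ₂ s + (1/2) * φ₂ t := by
      have := hφ₂conv.2 (Set.mem_Ici.2 hs0) (Set.mem_Ici.2 ht0)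
        (show (0:ℝ) ≤ 1/2 by norm_num) (show (0:ℝ) ≤ 1/2 by norm_num)
        (show (1:ℝ)/2 + 1/2 = 1 by norm_num)
      have heq : ((1:ℝ)/2) • s + ((1:ℝ)/2) • t = (s + t) / 2 := by
        simp [smul_eq_mul]; ring
      rw [heq] at this
      simpa [smul_eq_mul] using this
    have hφ₂s : φ₂ s = φ₁ (2 * v) := hcomp (2 * v) (by linarith)
    rw [hφ₂s] at hmid
    linarith
  -- assemble in EReal
  have hA : ((u * (v * w) - φ₂ (v * w) : ℝ) : EReal) ≤ orliczConjE φ₂ u :=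
    le_iSup₂ (f := fun x (_ : x ∈ Set.Ioi (0:ℝ)) =>
      ((u * x - φ₂ x : ℝ) : EReal)) (v * w) (Set.mem_Ioi.2 hvw)
  have hB : ((φ₂ (v * w) : ℝ) : EReal) ≤
      (((1 / 2) * (φ₁ (2 * v) + φ₂ t) : ℝ) : EReal) := by exact_mod_cast hkey
  calc ((u * v * w : ℝ) : EReal)
      = (((u * (v * w) - φ₂ (v * w)) + φ₂ (v * w) : ℝ) : EReal) := by
        exact congrArg Real.toEReal (by ring)
    _ = ((u * (v * w) - φ₂ (v * w) : ℝ) : EReal) + ((φ₂ (v * w) : ℝ) : EReal) :=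
        EReal.coe_add _ _
    _ ≤ orliczConjE φ₂ u + (((1 / 2) * (φ₁ (2 * v) + φ₂ t) : ℝ) : EReal) :=
        add_le_add hA hB
end

section
/- Let ψ, φ₁, φ₂ be Orlicz functions such that φ₂ satisfies φ₂(a·v·w) ≤ φ₂(v)·φ₂(w) for all v, w ≥ 0 for some a > 0 (Δ' globally), ψ ∘ φ₂ = φ₁, and set ζ = ψ* ∘ φ₂ where ψ* is the complementary function of ψ. Then for all u, v, w ≥ 0: uvw ≤ φ₂*(u) + φ₁(v/a) + ζ(w). -/
open Filter

lemma conj_lb (φ : ℝ → ℝ) (u t : ℝ) (ht : 0 < t) :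
    ((u * t - φ t : ℝ) : EReal) ≤ orliczConjE φ u :=
  le_iSup₂ (f := fun v (_ : v ∈ Set.Ioi (0:ℝ)) => ((u * v - φ v : ℝ) : EReal)) t ht

lemma conj_nonneg (φ : ℝ → ℝ) (hconv : ConvexOn ℝ (Set.Ici 0) φ) (h0 : φ 0 = 0)
    (hnn : 0 ≤ φ 1) (u : ℝ) (hu : 0 ≤ u) : (0 : EReal) ≤ orliczConjE φ u := by
  have hsmall : ∀ s : ℝ, 0 < s → s ≤ 1 → φ s ≤ s * φ 1 := by
    intro s hs hs1
    have := hconv.2 (x := 1) (y := 0) (by norm_num) (by norm_num) hs.le (by linarith)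
      (by ring : s + (1 - s) = 1)
    simpa [h0] using this
  refine le_of_forall_lt fun c hc => ?_
  obtain ⟨x, hcx, hx0⟩ := EReal.exists_between_coe_real hc
  have hx0' : x < 0 := by exact_mod_cast hx0
  set s : ℝ := min 1 (-x / (φ 1 + 1)) with hs
  have hs0 : 0 < s := lt_min one_pos (div_pos (by linarith) (by linarith))
  have hs1 : s ≤ 1 := min_le_left _ _
  have h1 : φ s ≤ s * φ 1 := hsmall s hs0 hs1
  have h2 : s * φ 1 ≤ -x := by
    have : s ≤ -x / (φ 1 + 1) := min_le_right _ _
    calc s * φ 1 ≤ (-x / (φ 1 + 1)) * φ 1 := by nlinarith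
      _ ≤ -x := by rw [div_mul_eq_mul_div, div_le_iff₀ (by linarith)]; nlinarith
  have h3 : x ≤ u * s - φ s := by nlinarith
  calc c < (x : EReal) := hcx
    _ ≤ ((u * s - φ s : ℝ) : EReal) := by exact_mod_cast h3
    _ ≤ orliczConjE φ u := conj_lb φ u s hs0

/-- Let ψ, φ₁, φ₂ be Orlicz functions with φ₂(a·v·w) ≤ φ₂(v)·φ₂(w) for all
v, w ≥ 0 (Δ' globally, constant a > 0), ψ ∘ φ₂ = φ₁, ψ* the (finite-valued) complementary
function of ψ, and ζ = ψ* ∘ φ₂. Then uvw ≤ φ₂*(u) + φ₁(v/a) + ζ(w) for all u, v, w ≥ 0. -/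
theorem orlicz_mult_ineq_b (ψ φ₁ φ₂ ψstar : ℝ → ℝ)
    (hψconv : ConvexOn ℝ (Set.Ici 0) ψ) (hψ0 : ψ 0 = 0)
    (hψnn : ∀ x, 0 ≤ x → 0 ≤ ψ x) (hψtop : Tendsto ψ atTop atTop)
    (hφ₁conv : ConvexOn ℝ (Set.Ici 0) φ₁) (hφ₁0 : φ₁ 0 = 0)
    (hφ₁nn : ∀ x, 0 ≤ x → 0 ≤ φ₁ x) (hφ₁top : Tendsto φ₁ atTop atTop)
    (hφ₂conv : ConvexOn ℝ (Set.Ici 0) φ₂) (hφ₂0 : φ₂ 0 = 0)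
    (hφ₂nn : ∀ x, 0 ≤ x → 0 ≤ φ₂ x) (hφ₂top : Tendsto φ₂ atTop atTop)
    (a : ℝ) (ha : 0 < a)
    (hΔ : ∀ v w : ℝ, 0 ≤ v → 0 ≤ w → φ₂ (a * v * w) ≤ φ₂ v * φ₂ w)
    (hψstar : ∀ u : ℝ, 0 ≤ u → ((ψstar u : ℝ) : EReal) = orliczConjE ψ u)
    (hcomp : ∀ u : ℝ, 0 ≤ u → ψ (φ₂ u) = φ₁ u) :
    ∀ u v w : ℝ, 0 ≤ u → 0 ≤ v → 0 ≤ w →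
      ((u * v * w : ℝ) : EReal) ≤
        orliczConjE φ₂ u + (((φ₁ (v / a) + ψstar (φ₂ w)) : ℝ) : EReal) := by
  intro u v w hu hv hw
  have hva : (0:ℝ) ≤ v / a := div_nonneg hv ha.le
  have hφ₂w : 0 ≤ φ₂ w := hφ₂nn w hw
  have hψstar_nn : ∀ t, 0 ≤ t → 0 ≤ ψstar t := by
    intro t ht
    have h1 : (0 : EReal) ≤ orliczConjE ψ t :=
      conj_nonneg ψ hψconv hψ0 (hψnn 1 (by norm_num)) t ht
    rw [← hψstar t ht] at h1
    exact_mod_cast h1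
  have young : ∀ s t : ℝ, 0 ≤ s → 0 ≤ t → s * t ≤ ψ s + ψstar t := by
    intro s t hs ht
    rcases eq_or_lt_of_le hs with rfl | hs'
    · simp only [zero_mul, hψ0, zero_add]
      exact hψstar_nn t ht
    · have h1 : ((t * s - ψ s : ℝ) : EReal) ≤ orliczConjE ψ t := conj_lb ψ t s hs'
      rw [← hψstar t ht] at h1
      have h2 : t * s - ψ s ≤ ψstar t := by exact_mod_cast h1
      linarith
  have hrnn : 0 ≤ φ₁ (v / a) + ψstar (φ₂ w) :=
    add_nonneg (hφ₁nn _ hva) (hψstar_nn _ hφ₂w)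
  by_cases hvw : v * w = 0
  · have h0 : u * v * w = 0 := by rw [mul_assoc, hvw, mul_zero]
    rw [h0]
    have hc : (0 : EReal) ≤ orliczConjE φ₂ u :=
      conj_nonneg φ₂ hφ₂conv hφ₂0 (hφ₂nn 1 (by norm_num)) u hu
    calc ((0:ℝ) : EReal) = 0 := by norm_num
      _ ≤ (((φ₁ (v / a) + ψstar (φ₂ w)) : ℝ) : EReal) := by exact_mod_cast hrnn
      _ = 0 + (((φ₁ (v / a) + ψstar (φ₂ w)) : ℝ) : EReal) := by rw [zero_add]
      _ ≤ _ := add_le_add_left hc _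
  · have hv' : 0 < v := lt_of_le_of_ne hv (by rintro rfl; simp at hvw)
    have hw' : 0 < w := lt_of_le_of_ne hw (by rintro rfl; simp at hvw)
    have ht : 0 < v * w := mul_pos hv' hw'
    have h1 : ((u * (v * w) - φ₂ (v * w) : ℝ) : EReal) ≤ orliczConjE φ₂ u :=
      conj_lb φ₂ u (v * w) ht
    have h2 : φ₂ (v * w) ≤ φ₁ (v / a) + ψstar (φ₂ w) := by
      have hΔ' := hΔ (v / a) w hva hw
      rw [show a * (v / a) * w = v * w by field_simp] at hΔ'
      have hy := young (φ₂ (v / a)) (φ₂ w) (hφ₂nn _ hva) hφ₂w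
      rw [hcomp (v / a) hva] at hy
      linarith
    calc ((u * v * w : ℝ) : EReal)
        = ((u * (v * w) - φ₂ (v * w) : ℝ) : EReal) + ((φ₂ (v * w) : ℝ) : EReal) := by
          rw [← EReal.coe_add]; congr 1; ring
      _ ≤ orliczConjE φ₂ u + (((φ₁ (v / a) + ψstar (φ₂ w)) : ℝ) : EReal) :=
          add_le_add h1 (by exact_mod_cast h2)
end

section
/- Let (X, Σ) be a measurable space with two equivalent σ-finite measures ν₁, ν₂ (each absolutely continuous with respect to the other), and let φ be an Orlicz function satisfying φ(auv) ≤ φ(u)·φ(v) for all u, v ≥ 0 for some a > 0 (Δ' globally), with φ a continuous bijection of [0, ∞) so that φ⁻¹ is a proper inverse. Then for every f ∈ L^φ(ν₁), the function φ⁻¹(dν₁/dν₂)·f belongs to L^φ(ν₂) and ‖φ⁻¹(dν₁/dν₂)·f‖_{φ,ν₂} ≤ a⁻¹·‖f‖_{φ,ν₁} in the Luxemburg norm. (Equivalently, the map f ↦ φ⁻¹(dν₁/dν₂)·f is bounded from L^φ(ν₁) to L^φ(ν₂) with norm at most 1/a.) -/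
open Filter MeasureTheory

/-- Membership of L^φ: ∫ φ(λ|f|) dν < ∞ for some λ > 0. -/
def MemOrlicz {X : Type*} [MeasurableSpace X] (ν : Measure X) (φ : ℝ → ℝ) (f : X → ℝ) : Prop :=
  Measurable f ∧ ∃ lam : ℝ, 0 < lam ∧ Integrable (fun x => φ (lam * |f x|)) ν

/-- The Luxemburg norm ‖f‖_φ = inf{λ > 0 : ∫ φ(|f|/λ) dν ≤ 1}. -/
noncomputable def luxNorm {X : Type*} [MeasurableSpace X] (ν : Measure X) (φ : ℝ → ℝ)
    (f : X → ℝ) : ℝ :=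
  sInf {lam : ℝ | 0 < lam ∧ ∫ x, φ (|f x| / lam) ∂ν ≤ 1}

/-- For equivalent σ-finite measures ν₁, ν₂ and a strictly increasing,
continuous Orlicz function φ (with proper inverse φ⁻¹) satisfying Δ' globally with
constant a > 0, the map f ↦ φ⁻¹(dν₁/dν₂)·f sends L^φ(ν₁) into L^φ(ν₂), with
‖φ⁻¹(dν₁/dν₂)·f‖_{φ,ν₂} ≤ a⁻¹·‖f‖_{φ,ν₁}. -/
theorem orlicz_equiv_measures_bounded {X : Type*} [MeasurableSpace X]
    (ν₁ ν₂ : Measure X) [SigmaFinite ν₁] [SigmaFinite ν₂]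
    (h12 : ν₁ ≪ ν₂) (h21 : ν₂ ≪ ν₁)
    (φ φinv : ℝ → ℝ)
    (hconv : ConvexOn ℝ (Set.Ici 0) φ)
    (h0 : φ 0 = 0)
    (hnn : ∀ x, 0 ≤ x → 0 ≤ φ x)
    (hmono : StrictMonoOn φ (Set.Ici 0))
    (hcont : ContinuousOn φ (Set.Ici 0))
    (htop : Tendsto φ atTop atTop)
    (hinv1 : ∀ t : ℝ, 0 ≤ t → φ (φinv t) = t)
    (hinv2 : ∀ t : ℝ, 0 ≤ t → 0 ≤ φinv t)
    (a : ℝ) (ha : 0 < a)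
    (hΔ : ∀ u v : ℝ, 0 ≤ u → 0 ≤ v → φ (a * u * v) ≤ φ u * φ v)
    (f : X → ℝ) (hf : MemOrlicz ν₁ φ f) :
    MemOrlicz ν₂ φ (fun x => φinv ((ν₁.rnDeriv ν₂ x).toReal) * f x) ∧
      luxNorm ν₂ φ (fun x => φinv ((ν₁.rnDeriv ν₂ x).toReal) * f x) ≤
        a⁻¹ * luxNorm ν₁ φ f := by
  obtain ⟨hfm, l0, hl0, hint⟩ := hf
  set w : X → ℝ := fun x => (ν₁.rnDeriv ν₂ x).toReal with hw_def
  set g : X → ℝ := fun x => φinv (w x) with hg_def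
  have hw : Measurable w := (Measure.measurable_rnDeriv ν₁ ν₂).ennreal_toReal
  have hwnn : ∀ x, 0 ≤ w x := fun x => ENNReal.toReal_nonneg
  have hgnn : ∀ x, 0 ≤ g x := fun x => hinv2 _ (hwnn x)
  -- φinv ∘ max · 0 is monotone, hence measurable
  have hFmono : Monotone (fun t : ℝ => φinv (max t 0)) := by
    intro s t hst
    by_contra h
    push_neg at h
    have h1 : φ (φinv (max t 0)) < φ (φinv (max s 0)) :=
      hmono (hinv2 _ (le_max_right _ _)) (hinv2 _ (le_max_right _ _)) h
    rw [hinv1 _ (le_max_right _ _), hinv1 _ (le_max_right _ _)] at h1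
    exact absurd (max_le_max hst le_rfl) (not_le.mpr h1)
  have hg : Measurable g := by
    have : g = (fun t : ℝ => φinv (max t 0)) ∘ w := by
      funext x; simp [hg_def, max_eq_left (hwnn x)]
    rw [this]
    exact hFmono.measurable.comp hw
  -- composing with φ preserves measurability for nonneg arguments
  have hΦmono : Monotone (fun t : ℝ => φ (max t 0)) := by
    intro s t hst
    exact hmono.monotoneOn (Set.mem_Ici.mpr (le_max_right _ _)) (Set.mem_Ici.mpr (le_max_right _ _)) (max_le_max hst le_rfl)
  have hcomp : ∀ h : X → ℝ, Measurable h → (∀ x, 0 ≤ h x) → Measurable (fun x => φ (h x)) := by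
    intro h hh hpos
    have : (fun x => φ (h x)) = (fun t : ℝ => φ (max t 0)) ∘ h := by
      funext x; simp [max_eq_left (hpos x)]
    rw [this]
    exact hΦmono.measurable.comp hh
  -- key pointwise bound
  have hkey : ∀ (u : ℝ) (x : X), 0 ≤ u → φ (a * u * g x) ≤ φ u * w x := by
    intro u x hu
    have := hΔ u (g x) hu (hgnn x)
    rwa [hinv1 _ (hwnn x)] at this
  have habs : ∀ x, |g x * f x| = g x * |f x| := by
    intro x; rw [abs_mul, abs_of_nonneg (hgnn x)]
  -- no junk: φ(|f|/lam) is ν₁-integrable for every lam > 0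
  have hnojunk : ∀ lam : ℝ, 0 < lam → Integrable (fun x => φ (|f x| / lam)) ν₁ := by
    intro lam hlam
    have hv : (0:ℝ) < (a * l0 * lam)⁻¹ := by positivity
    refine (hint.mul_const (φ ((a * l0 * lam)⁻¹))).mono'
      ((hcomp _ (hfm.abs.div_const lam) (fun x => by positivity)).aestronglyMeasurable) ?_
    filter_upwards with x
    have harg : |f x| / lam = a * (l0 * |f x|) * (a * l0 * lam)⁻¹ := by
      field_simp
    rw [Real.norm_eq_abs, abs_of_nonneg (hnn _ (by positivity)), harg]
    exact hΔ _ _ (by positivity) hv.le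
  -- integrability transfer via RN derivative
  have htrans : ∀ h : X → ℝ, Integrable h ν₁ →
      Integrable (fun x => φ (a * h x * g x) ) ν₂ → True := fun _ _ _ => trivial
  constructor
  · -- membership
    refine ⟨hg.mul hfm, a * l0, by positivity, ?_⟩
    have hR : Integrable (fun x => φ (l0 * |f x|) * w x) ν₂ := by
      have := (MeasureTheory.integrable_rnDeriv_smul_iff (f := fun x => φ (l0 * |f x|)) h12).mpr hint
      refine this.congr ?_
      filter_upwards with x
      simp [smul_eq_mul, mul_comm, hw_def]
    refine hR.mono' ((hcomp _ (((measurable_const (a := a * l0)).mul (hg.mul hfm).abs))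
      (fun x => by show 0 ≤ a * l0 * |g x * f x|; positivity)).aestronglyMeasurable) ?_
    filter_upwards with x
    rw [Real.norm_eq_abs, abs_of_nonneg (hnn _ (by positivity)), habs x]
    have harg : a * l0 * (g x * |f x|) = a * (l0 * |f x|) * g x := by ring
    rw [harg]
    exact hkey _ x (by positivity)
  · -- norm bound
    set S₁ := {lam : ℝ | 0 < lam ∧ ∫ x, φ (|f x| / lam) ∂ν₁ ≤ 1} with hS₁
    set S₂ := {lam : ℝ | 0 < lam ∧ ∫ x, φ (|g x * f x| / lam) ∂ν₂ ≤ 1} with hS₂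
    have hbdd : BddBelow S₂ := ⟨0, fun x hx => hx.1.le⟩
    -- each lam ∈ S₁ gives a⁻¹ * lam ∈ S₂
    have hstepB : ∀ lam ∈ S₁, a⁻¹ * lam ∈ S₂ := by
      rintro lam ⟨hlam, hle⟩
      have h1 : Integrable (fun x => φ (|f x| / lam)) ν₁ := hnojunk lam hlam
      have hR : Integrable (fun x => φ (|f x| / lam) * w x) ν₂ := by
        have := (MeasureTheory.integrable_rnDeriv_smul_iff (f := fun x => φ (|f x| / lam)) h12).mpr h1
        refine this.congr ?_
        filter_upwards with x
        simp [smul_eq_mul, mul_comm, hw_def]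
      have hptarg : ∀ x, |g x * f x| / (a⁻¹ * lam) = a * (|f x| / lam) * g x := by
        intro x
        rw [habs x]
        field_simp
      have hpt : ∀ x, φ (|g x * f x| / (a⁻¹ * lam)) ≤ φ (|f x| / lam) * w x := by
        intro x
        rw [hptarg x]
        exact hkey _ x (div_nonneg (abs_nonneg _) hlam.le)
      have hL : Integrable (fun x => φ (|g x * f x| / (a⁻¹ * lam))) ν₂ := by
        refine hR.mono' ((hcomp _ ((hg.mul hfm).abs.div_const _)
          (fun x => div_nonneg (abs_nonneg _) (by positivity))).aestronglyMeasurable) ?_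
        filter_upwards with x
        rw [Real.norm_eq_abs, abs_of_nonneg (hnn _ (by positivity))]
        exact hpt x
      refine ⟨by positivity, ?_⟩
      have h2 : ∫ x, φ (|g x * f x| / (a⁻¹ * lam)) ∂ν₂ ≤ ∫ x, φ (|f x| / lam) * w x ∂ν₂ :=
        integral_mono hL hR hpt
      have h3 : ∫ x, φ (|f x| / lam) * w x ∂ν₂ = ∫ x, φ (|f x| / lam) ∂ν₁ := by
        rw [← MeasureTheory.integral_rnDeriv_smul (f := fun x => φ (|f x| / lam)) h12]
        congr 1
        funext x
        simp [smul_eq_mul, mul_comm, hw_def]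
      calc ∫ x, φ (|g x * f x| / (a⁻¹ * lam)) ∂ν₂ ≤ _ := h2
        _ = _ := h3
        _ ≤ 1 := hle
    -- S₁ is nonempty
    have hI₀ : (0:ℝ) ≤ ∫ x, φ (l0 * |f x|) ∂ν₁ :=
      integral_nonneg fun x => hnn _ (by positivity)
    set I₀ := ∫ x, φ (l0 * |f x|) ∂ν₁ with hI₀def
    have hlam₁pos : (0:ℝ) < (1 + I₀) / l0 := by positivity
    have hS₁ne : S₁.Nonempty := by
      refine ⟨(1 + I₀) / l0, hlam₁pos, ?_⟩
      have hpt : ∀ x, φ (|f x| / ((1 + I₀) / l0)) ≤ (1 + I₀)⁻¹ * φ (l0 * |f x|) := by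
        intro x
        have ht0 : (0:ℝ) ≤ (1 + I₀)⁻¹ := by positivity
        have ht1 : (1 + I₀)⁻¹ ≤ 1 := by
          rw [inv_le_one_iff₀]; right; linarith
        have harg : |f x| / ((1 + I₀) / l0) = (1 + I₀)⁻¹ * (l0 * |f x|) := by
          field_simp
        rw [harg]
        have := hconv.2 (Set.mem_Ici.mpr (by positivity : (0:ℝ) ≤ l0 * |f x|))
          (Set.mem_Ici.mpr le_rfl) ht0 (by linarith : (0:ℝ) ≤ 1 - (1 + I₀)⁻¹) (by ring)
        simp only [smul_eq_mul, mul_zero, add_zero, h0] at this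
        linarith [this]
      have hL : Integrable (fun x => φ (|f x| / ((1 + I₀) / l0))) ν₁ := hnojunk _ hlam₁pos
      have h2 : ∫ x, φ (|f x| / ((1 + I₀) / l0)) ∂ν₁ ≤ ∫ x, (1 + I₀)⁻¹ * φ (l0 * |f x|) ∂ν₁ :=
        integral_mono hL (hint.const_mul _) hpt
      rw [integral_const_mul] at h2
      have : (1 + I₀)⁻¹ * I₀ ≤ 1 := by
        rw [inv_mul_le_iff₀ (by positivity)]; linarith
      calc ∫ x, φ (|f x| / ((1 + I₀) / l0)) ∂ν₁ ≤ (1 + I₀)⁻¹ * I₀ := h2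
        _ ≤ 1 := this
    -- combine
    have hfinal : a * sInf S₂ ≤ sInf S₁ := by
      refine le_csInf hS₁ne fun lam hlam => ?_
      have h1 : sInf S₂ ≤ a⁻¹ * lam := csInf_le hbdd (hstepB lam hlam)
      calc a * sInf S₂ ≤ a * (a⁻¹ * lam) := by gcongr
        _ = lam := by field_simp
    unfold luxNorm
    calc sInf S₂ = a⁻¹ * (a * sInf S₂) := by field_simp
      _ ≤ a⁻¹ * sInf S₁ := by gcongr
end
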